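/- Let p : (0, ∞) → ℝ be p(x) = 2(1 - Φ(x)) and let g(x) = c · x^(1/α) · e^(x²/(2α)) for constants c > 0 and 0 < α < 2. If a distribution function F satisfies 1 - F(y) ≥ K y^(-α) for all y ≥ y₀ (some K, y₀ > 0) with K c^(-α) = √(2/π), then there exists x₀ such that for all x ≥ x₀, p(x) ≤ 1 - F(g(x)). -/

import Mathlib

/-- The standard normal cumulative distribution function Φ. -/
noncomputable def stdNormalCDF (x : ℝ) : ℝ :=
  ∫ t in Set.Iic x, (Real.sqrt (2 * Real.pi))⁻¹ * Real.exp (-t ^ 2 / 2)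

open Real MeasureTheory Filter Set

lemma gauss_fun_eq (t : ℝ) : Real.exp (-t ^ 2 / 2) = Real.exp (-(1/2 : ℝ) * t ^ 2) := by
  rw [show -t ^ 2 / 2 = -(1/2 : ℝ) * t ^ 2 by ring]

lemma gauss_integrable :
    Integrable (fun t : ℝ => (Real.sqrt (2 * Real.pi))⁻¹ * Real.exp (-t ^ 2 / 2)) := by
  simp only [gauss_fun_eq]
  exact (integrable_exp_neg_mul_sq (by norm_num : (0:ℝ) < 1/2)).const_mul _

lemma gauss_total :
    ∫ t : ℝ, (Real.sqrt (2 * Real.pi))⁻¹ * Real.exp (-t ^ 2 / 2) = 1 := by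
  simp only [gauss_fun_eq]
  rw [MeasureTheory.integral_const_mul, integral_gaussian]
  have h : Real.pi / (1/2) = 2 * Real.pi := by ring
  rw [h, inv_mul_cancel₀]
  positivity

lemma exp_deriv_aux (t : ℝ) :
    HasDerivAt (fun s : ℝ => -Real.exp (-s ^ 2 / 2)) (t * Real.exp (-t ^ 2 / 2)) t := by
  have h1 : HasDerivAt (fun s : ℝ => -s ^ 2 / 2) (-t) t := by
    have := ((hasDerivAt_pow 2 t).neg).div_const 2
    refine this.congr_deriv ?_
    simp; ring
  have h2 := (h1.exp).neg
  refine h2.congr_deriv ?_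
  ring

lemma tail_integral (x : ℝ) (hx : 0 < x) :
    ∫ t in Set.Ioi x, t * Real.exp (-t ^ 2 / 2) = Real.exp (-x ^ 2 / 2) := by
  have hderiv : ∀ t ∈ Set.Ici x,
      HasDerivAt (fun s : ℝ => -Real.exp (-s ^ 2 / 2)) (t * Real.exp (-t ^ 2 / 2)) t :=
    fun t _ => exp_deriv_aux t
  have htend : Tendsto (fun s : ℝ => -Real.exp (-s ^ 2 / 2)) atTop (nhds 0) := by
    rw [← neg_zero]
    apply Tendsto.neg
    apply Real.tendsto_exp_atBot.comp
    have h1 : Tendsto (fun s : ℝ => s ^ 2) atTop atTop := tendsto_pow_atTop two_ne_zero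
    have h2 : Tendsto (fun s : ℝ => -s ^ 2) atTop atBot := tendsto_neg_atBot_iff.mpr h1
    exact h2.atBot_div_const (by norm_num)
  have := integral_Ioi_of_hasDerivAt_of_tendsto' hderiv
    (integrableOn_Ioi_deriv_of_nonneg' hderiv (fun t ht => ?_) htend) htend
  · rw [this]; simp
  · have : 0 < t := lt_trans hx ht
    positivity

lemma tail_integrable (x : ℝ) (hx : 0 < x) :
    IntegrableOn (fun t : ℝ => t * Real.exp (-t ^ 2 / 2)) (Set.Ioi x) := by
  have hderiv : ∀ t ∈ Set.Ici x,
      HasDerivAt (fun s : ℝ => -Real.exp (-s ^ 2 / 2)) (t * Real.exp (-t ^ 2 / 2)) t :=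
    fun t _ => exp_deriv_aux t
  have htend : Tendsto (fun s : ℝ => -Real.exp (-s ^ 2 / 2)) atTop (nhds 0) := by
    rw [← neg_zero]
    apply Tendsto.neg
    apply Real.tendsto_exp_atBot.comp
    have h1 : Tendsto (fun s : ℝ => s ^ 2) atTop atTop := tendsto_pow_atTop two_ne_zero
    exact (tendsto_neg_atBot_iff.mpr h1).atBot_div_const (by norm_num)
  refine integrableOn_Ioi_deriv_of_nonneg' hderiv (fun t ht => ?_) htend
  have : 0 < t := lt_trans hx ht
  positivity

lemma mill (x : ℝ) (hx : 0 < x) :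
    1 - stdNormalCDF x ≤ (Real.sqrt (2 * Real.pi))⁻¹ * (x⁻¹ * Real.exp (-x ^ 2 / 2)) := by
  have hsplit := intervalIntegral.integral_Iic_add_Ioi (b := x) (μ := volume)
    gauss_integrable.integrableOn gauss_integrable.integrableOn
  have htot : stdNormalCDF x
      + ∫ t in Set.Ioi x, (Real.sqrt (2 * Real.pi))⁻¹ * Real.exp (-t ^ 2 / 2) = 1 := by
    unfold stdNormalCDF
    rw [hsplit]
    exact gauss_total
  have h1 : 1 - stdNormalCDF x =
      ∫ t in Set.Ioi x, (Real.sqrt (2 * Real.pi))⁻¹ * Real.exp (-t ^ 2 / 2) := by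
    linarith
  rw [h1]
  have hmono : ∫ t in Set.Ioi x, (Real.sqrt (2 * Real.pi))⁻¹ * Real.exp (-t ^ 2 / 2)
      ≤ ∫ t in Set.Ioi x,
        ((Real.sqrt (2 * Real.pi))⁻¹ * x⁻¹) * (t * Real.exp (-t ^ 2 / 2)) := by
    apply setIntegral_mono_on gauss_integrable.integrableOn
      (((tail_integrable x hx).const_mul _)) measurableSet_Ioi
    intro t ht
    have htx : x < t := ht
    have h2 : (1 : ℝ) ≤ x⁻¹ * t :=
      calc (1:ℝ) = x⁻¹ * x := (inv_mul_cancel₀ hx.ne').symm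
        _ ≤ x⁻¹ * t := by
            apply mul_le_mul_of_nonneg_left htx.le (inv_pos.mpr hx).le
    have hCe : 0 ≤ (Real.sqrt (2 * Real.pi))⁻¹ * Real.exp (-t ^ 2 / 2) := by positivity
    calc (Real.sqrt (2 * Real.pi))⁻¹ * Real.exp (-t ^ 2 / 2)
        = ((Real.sqrt (2 * Real.pi))⁻¹ * Real.exp (-t ^ 2 / 2)) * 1 := by ring
      _ ≤ ((Real.sqrt (2 * Real.pi))⁻¹ * Real.exp (-t ^ 2 / 2)) * (x⁻¹ * t) :=
          mul_le_mul_of_nonneg_left h2 hCe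
      _ = (Real.sqrt (2 * Real.pi))⁻¹ * x⁻¹ * (t * Real.exp (-t ^ 2 / 2)) := by ring
  calc _ ≤ _ := hmono
    _ = (Real.sqrt (2 * Real.pi))⁻¹ * (x⁻¹ * Real.exp (-x ^ 2 / 2)) := by
        rw [MeasureTheory.integral_const_mul, tail_integral x hx]; ring

theorem stmt_13 (α c K y₀ : ℝ) (hα0 : 0 < α) (hα2 : α < 2) (hc : 0 < c)
    (hK : 0 < K) (hy₀ : 0 < y₀)
    (F : ℝ → ℝ) (hF : ∀ y, y₀ ≤ y → K * y ^ (-α) ≤ 1 - F y)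
    (hKc : K * c ^ (-α) = Real.sqrt (2 / Real.pi)) :
    ∃ x₀ : ℝ, ∀ x, x₀ ≤ x →
      2 * (1 - stdNormalCDF x) ≤ 1 - F (c * x ^ (1 / α) * Real.exp (x ^ 2 / (2 * α))) := by
  -- g tends to infinity
  have hg : Tendsto (fun x : ℝ => c * x ^ (1 / α) * Real.exp (x ^ 2 / (2 * α))) atTop atTop := by
    have h1 : Tendsto (fun x : ℝ => x ^ (1 / α)) atTop atTop :=
      tendsto_rpow_atTop (by positivity)
    have h2 : Tendsto (fun x : ℝ => Real.exp (x ^ 2 / (2 * α))) atTop atTop := by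
      apply Real.tendsto_exp_atTop.comp
      exact (tendsto_pow_atTop two_ne_zero).atTop_div_const (by positivity)
    have h3 := h1.atTop_mul_atTop₀ h2
    have h4 := h3.const_mul_atTop hc
    convert h4 using 2 with x
    ring
  obtain ⟨x₀, hx₀⟩ := eventually_atTop.mp ((hg.eventually_ge_atTop y₀).and (eventually_ge_atTop 1))
  refine ⟨x₀, fun x hx => ?_⟩
  obtain ⟨hgy, hx1⟩ := hx₀ x hx
  have hxpos : (0 : ℝ) < x := lt_of_lt_of_le one_pos hx1
  set g := c * x ^ (1 / α) * Real.exp (x ^ 2 / (2 * α)) with hgdef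
  -- compute g ^ (-α)
  have hrp : (x ^ (1 / α)) ^ (-α) = x⁻¹ := by
    rw [← Real.rpow_mul hxpos.le, show 1 / α * (-α) = -1 by field_simp, Real.rpow_neg_one]
  have hexp : (Real.exp (x ^ 2 / (2 * α))) ^ (-α) = Real.exp (-x ^ 2 / 2) := by
    rw [← Real.exp_one_rpow (x ^ 2 / (2 * α)), ← Real.rpow_mul (Real.exp_one_rpow _ ▸ (Real.exp_pos _).le)]
    rw [Real.exp_one_rpow]
    congr 1
    field_simp
  have hgpow : g ^ (-α) = c ^ (-α) * (x⁻¹ * Real.exp (-x ^ 2 / 2)) := by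
    rw [hgdef, Real.mul_rpow (by positivity) (Real.exp_pos _).le,
      Real.mul_rpow hc.le (by positivity), hrp, hexp]
    ring
  have hbound := hF g hgy
  have hmill := mill x hxpos
  -- key constant identity: 2 * (√(2π))⁻¹ = √(2/π)
  have hconst : Real.sqrt (2 / Real.pi) = 2 * (Real.sqrt (2 * Real.pi))⁻¹ := by
    have hpi : (0:ℝ) < Real.pi := Real.pi_pos
    rw [eq_comm, mul_inv_eq_iff_eq_mul₀ (by positivity), ← Real.sqrt_mul (by positivity)]
    rw [show 2 / Real.pi * (2 * Real.pi) = 2 ^ 2 by field_simp]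
    rw [Real.sqrt_sq (by norm_num)]
  have hKg : K * g ^ (-α) = Real.sqrt (2 / Real.pi) * (x⁻¹ * Real.exp (-x ^ 2 / 2)) := by
    rw [hgpow, ← mul_assoc, hKc]
  have h2 : 2 * (1 - stdNormalCDF x) ≤ K * g ^ (-α) := by
    rw [hKg, hconst]
    nlinarith [hmill]
  linarith
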